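/- Let X be a nonempty set, 𝒟 an algebra of bounded real-valued functions on X that is also a vector lattice with the Stone property, and (L,𝒟) a Lagrangian whose associated energy is E_L(f) := (1/2)·sup{|L_{f,f}(h)| : h ∈ 𝒟, ‖h‖_sup ≤ 1}. Then E_L satisfies the parallelogram identity 2·(E_L(f) + E_L(g)) = E_L(f+g) + E_L(f−g) for all f, g ∈ 𝒟, and the unit contraction operates on E_L: E_L(T₁∘f) ≤ E_L(f) for all f ∈ 𝒟, where T₁(x) = min(max(x,0),1). -/

import Mathlib

open Filter Topology

/-- The supremum norm of a (bounded) real-valued function. -/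
noncomputable def supNorm {X : Type*} (f : X → ℝ) : ℝ := ⨆ x, |f x|

/-- The unit contraction `T₁(t) = min(max(t,0),1)`. -/
def unitContraction (t : ℝ) : ℝ := min (max t 0) 1

/-- The energy associated with a Lagrangian:
`E_L(f) = (1/2)·sup{|L_{f,f}(h)| : h ∈ 𝒟, ‖h‖_sup ≤ 1}`. -/
noncomputable def lagEnergy {X : Type*} (𝒟 : Set (X → ℝ))
    (L : (X → ℝ) → (X → ℝ) → (X → ℝ) → ℝ) (f : X → ℝ) : ℝ :=
  (1 / 2) * sSup ((fun h => |L f f h|) '' {h | h ∈ 𝒟 ∧ supNorm h ≤ 1})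

/-- The set of nonnegative elements of `𝒟` of sup norm at most one. -/
def posBall {X : Type*} (𝒟 : Set (X → ℝ)) : Set (X → ℝ) :=
  {h | h ∈ 𝒟 ∧ (∀ x, 0 ≤ h x) ∧ supNorm h ≤ 1}

/-- Additivity of the supremum over an upward-directed set, for functionals
monotone on that set. -/
lemma sSup_image_add_aux {X : Type*} (K : Set (X → ℝ)) (ℓ₁ ℓ₂ : (X → ℝ) → ℝ)
    (hne : K.Nonempty)
    (hdir : ∀ h₁ ∈ K, ∀ h₂ ∈ K, ∃ m ∈ K, (∀ x, h₁ x ≤ m x) ∧ (∀ x, h₂ x ≤ m x))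
    (hm₁ : ∀ a ∈ K, ∀ b ∈ K, (∀ x, a x ≤ b x) → ℓ₁ a ≤ ℓ₁ b)
    (hm₂ : ∀ a ∈ K, ∀ b ∈ K, (∀ x, a x ≤ b x) → ℓ₂ a ≤ ℓ₂ b)
    (hb₁ : ∃ C, ∀ h ∈ K, ℓ₁ h ≤ C) (hb₂ : ∃ C, ∀ h ∈ K, ℓ₂ h ≤ C) :
    sSup ((fun h => ℓ₁ h + ℓ₂ h) '' K) = sSup (ℓ₁ '' K) + sSup (ℓ₂ '' K) := by
  obtain ⟨C₁, hC₁⟩ := hb₁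
  obtain ⟨C₂, hC₂⟩ := hb₂
  have bA : BddAbove (ℓ₁ '' K) := ⟨C₁, by rintro _ ⟨h, hh, rfl⟩; exact hC₁ h hh⟩
  have bB : BddAbove (ℓ₂ '' K) := ⟨C₂, by rintro _ ⟨h, hh, rfl⟩; exact hC₂ h hh⟩
  have bC : BddAbove ((fun h => ℓ₁ h + ℓ₂ h) '' K) :=
    ⟨C₁ + C₂, by rintro _ ⟨h, hh, rfl⟩; exact add_le_add (hC₁ h hh) (hC₂ h hh)⟩
  apply le_antisymm
  · apply csSup_le (hne.image _)
    rintro _ ⟨h, hh, rfl⟩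
    exact add_le_add (le_csSup bA ⟨h, hh, rfl⟩) (le_csSup bB ⟨h, hh, rfl⟩)
  · have key : ∀ h₁ ∈ K, ∀ h₂ ∈ K,
        ℓ₁ h₁ + ℓ₂ h₂ ≤ sSup ((fun h => ℓ₁ h + ℓ₂ h) '' K) := by
      intro h₁ hh₁ h₂ hh₂
      obtain ⟨m, hm, hle₁, hle₂⟩ := hdir h₁ hh₁ h₂ hh₂
      have h3 := le_csSup bC (Set.mem_image_of_mem _ hm)
      have e1 := hm₁ h₁ hh₁ m hm hle₁
      have e2 := hm₂ h₂ hh₂ m hm hle₂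
      linarith
    have h1 : sSup (ℓ₁ '' K) ≤ sSup ((fun h => ℓ₁ h + ℓ₂ h) '' K) - sSup (ℓ₂ '' K) := by
      apply csSup_le (hne.image _)
      rintro _ ⟨h₁, hh₁, rfl⟩
      have h2 : sSup (ℓ₂ '' K) ≤ sSup ((fun h => ℓ₁ h + ℓ₂ h) '' K) - ℓ₁ h₁ := by
        apply csSup_le (hne.image _)
        rintro _ ⟨h₂, hh₂, rfl⟩
        linarith [key h₁ hh₁ h₂ hh₂]
      linarith
    linarith

theorem statement_11 {X : Type*} [Nonempty X] (𝒟 : Set (X → ℝ))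
    (L : (X → ℝ) → (X → ℝ) → (X → ℝ) → ℝ)
    (hbdd : ∀ f ∈ 𝒟, ∃ C : ℝ, ∀ x, |f x| ≤ C)
    (hadd : ∀ f ∈ 𝒟, ∀ g ∈ 𝒟, f + g ∈ 𝒟)
    (hsmul : ∀ c : ℝ, ∀ f ∈ 𝒟, c • f ∈ 𝒟)
    (hmul : ∀ f ∈ 𝒟, ∀ g ∈ 𝒟, f * g ∈ 𝒟)
    (hmax : ∀ f ∈ 𝒟, ∀ g ∈ 𝒟, (fun x => max (f x) (g x)) ∈ 𝒟)
    (hmin : ∀ f ∈ 𝒟, ∀ g ∈ 𝒟, (fun x => min (f x) (g x)) ∈ 𝒟)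
    (hstone : ∀ f ∈ 𝒟, (fun x => min (f x) 1) ∈ 𝒟)
    -- each `L_{f,g}` is a sup-norm-bounded linear functional on `𝒟`
    (hLbdd : ∀ f ∈ 𝒟, ∀ g ∈ 𝒟, ∃ C : ℝ, ∀ h ∈ 𝒟, |L f g h| ≤ C * supNorm h)
    (hLaddh : ∀ f ∈ 𝒟, ∀ g ∈ 𝒟, ∀ h₁ ∈ 𝒟, ∀ h₂ ∈ 𝒟,
      L f g (h₁ + h₂) = L f g h₁ + L f g h₂)
    (hLsmulh : ∀ f ∈ 𝒟, ∀ g ∈ 𝒟, ∀ c : ℝ, ∀ h ∈ 𝒟, L f g (c • h) = c * L f g h)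
    -- `L` is bilinear and symmetric in `(f,g)`
    (hLsym : ∀ f ∈ 𝒟, ∀ g ∈ 𝒟, ∀ h ∈ 𝒟, L f g h = L g f h)
    (hLaddf : ∀ f₁ ∈ 𝒟, ∀ f₂ ∈ 𝒟, ∀ g ∈ 𝒟, ∀ h ∈ 𝒟,
      L (f₁ + f₂) g h = L f₁ g h + L f₂ g h)
    (hLsmulf : ∀ c : ℝ, ∀ f ∈ 𝒟, ∀ g ∈ 𝒟, ∀ h ∈ 𝒟, L (c • f) g h = c * L f g h)
    -- positivity of each `L_f = L_{f,f}`
    (hLpos : ∀ f ∈ 𝒟, ∀ h ∈ 𝒟, (∀ x, 0 ≤ h x) → 0 ≤ L f f h)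
    -- the unit contraction operates on `(L,𝒟)`
    (hLT1 : ∀ f ∈ 𝒟, unitContraction ∘ f ∈ 𝒟 ∧
      ∀ h ∈ 𝒟, (∀ x, 0 ≤ h x) →
        L (unitContraction ∘ f) (unitContraction ∘ f) h ≤ L f f h) :
    (∀ f ∈ 𝒟, ∀ g ∈ 𝒟,
      2 * (lagEnergy 𝒟 L f + lagEnergy 𝒟 L g) =
        lagEnergy 𝒟 L (f + g) + lagEnergy 𝒟 L (f - g)) ∧
    (∀ f ∈ 𝒟, lagEnergy 𝒟 L (unitContraction ∘ f) ≤ lagEnergy 𝒟 L f) := by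
  classical
  obtain ⟨x₀⟩ := ‹Nonempty X›
  -- basic facts about supNorm
  have hsn_le : ∀ h ∈ 𝒟, ∀ x, |h x| ≤ supNorm h := by
    intro h hh x
    obtain ⟨C, hC⟩ := hbdd h hh
    exact le_ciSup ⟨C, by rintro _ ⟨y, rfl⟩; exact hC y⟩ x
  have hsn0 : ∀ h ∈ 𝒟, 0 ≤ supNorm h := fun h hh =>
    le_trans (abs_nonneg _) (hsn_le h hh x₀)
  have hzero : ∀ f ∈ 𝒟, (0 : X → ℝ) ∈ 𝒟 := by
    intro f hf; simpa using hsmul 0 f hf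
  have hsnzero : supNorm (0 : X → ℝ) ≤ 1 := by
    simp [supNorm]
  have hneg : ∀ h ∈ 𝒟, (fun x => -(h x)) ∈ 𝒟 := by
    intro h hh
    have e : (fun x => -(h x)) = (-1 : ℝ) • h := by funext x; simp
    rw [e]; exact hsmul (-1) h hh
  have hKmem : ∀ h ∈ posBall 𝒟, h ∈ 𝒟 ∧ (∀ x, 0 ≤ h x) ∧ supNorm h ≤ 1 :=
    fun h hh => hh
  have h0K : ∀ f ∈ 𝒟, (0 : X → ℝ) ∈ posBall 𝒟 :=
    fun f hf => ⟨hzero f hf, fun x => le_refl 0, hsnzero⟩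
  -- monotonicity of positive functionals
  have hmono : ∀ f ∈ 𝒟, ∀ a ∈ 𝒟, ∀ b ∈ 𝒟, (∀ x, a x ≤ b x) → L f f a ≤ L f f b := by
    intro f hf a ha b hb hab
    have hna : (fun x => -(a x)) ∈ 𝒟 := hneg a ha
    have hd : b + (fun x => -(a x)) ∈ 𝒟 := hadd b hb _ hna
    have hpos : 0 ≤ L f f (b + fun x => -(a x)) :=
      hLpos f hf _ hd (fun x => by
        have := hab x; simp only [Pi.add_apply]; linarith)
    have hsplit : L f f (b + fun x => -(a x)) = L f f b + (-1) * L f f a := by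
      rw [hLaddh f hf f hf b hb _ hna]
      congr 1
      have e : (fun x => -(a x)) = (-1 : ℝ) • a := by funext x; simp
      rw [e, hLsmulh f hf f hf (-1) a ha]
    rw [hsplit] at hpos
    linarith
  -- bound on the unit ball
  have hbound : ∀ f ∈ 𝒟, ∃ C, ∀ h ∈ 𝒟, supNorm h ≤ 1 → |L f f h| ≤ C := by
    intro f hf
    obtain ⟨C, hC⟩ := hLbdd f hf f hf
    refine ⟨max C 0, fun h hh hs => ?_⟩
    have h1 := hC h hh
    have h2 := hsn0 h hh
    nlinarith [le_max_left C 0, le_max_right C 0,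
      mul_nonneg (sub_nonneg.2 (le_max_left C 0)) h2,
      mul_nonneg (le_max_right C 0) (sub_nonneg.2 hs)]
  have hbddQ : ∀ f ∈ 𝒟, BddAbove ((fun h => L f f h) '' posBall 𝒟) := by
    intro f hf
    obtain ⟨C, hC⟩ := hbound f hf
    exact ⟨C, by
      rintro _ ⟨h, hh, rfl⟩
      obtain ⟨h1, _, h3⟩ := hKmem h hh
      exact le_trans (le_abs_self _) (hC h h1 h3)⟩
  have hbddS : ∀ f ∈ 𝒟,
      BddAbove ((fun h => |L f f h|) '' {h | h ∈ 𝒟 ∧ supNorm h ≤ 1}) := by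
    intro f hf
    obtain ⟨C, hC⟩ := hbound f hf
    exact ⟨C, by rintro _ ⟨h, ⟨hh, hs⟩, rfl⟩; exact hC h hh hs⟩
  have hneQ : ∀ f ∈ 𝒟, ((fun h => L f f h) '' posBall 𝒟).Nonempty :=
    fun f hf => ⟨_, Set.mem_image_of_mem _ (h0K f hf)⟩
  have hneS : ∀ f ∈ 𝒟,
      ((fun h => |L f f h|) '' {h | h ∈ 𝒟 ∧ supNorm h ≤ 1}).Nonempty :=
    fun f hf => ⟨_, Set.mem_image_of_mem _ ⟨hzero f hf, hsnzero⟩⟩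
  -- the absolute-value sup equals the sup over the positive part of the ball
  have key1 : ∀ f ∈ 𝒟,
      sSup ((fun h => |L f f h|) '' {h | h ∈ 𝒟 ∧ supNorm h ≤ 1}) =
      sSup ((fun h => L f f h) '' posBall 𝒟) := by
    intro f hf
    apply le_antisymm
    · apply csSup_le (hneS f hf)
      rintro _ ⟨h, ⟨hh, hs⟩, rfl⟩
      have hha : (fun x => max (h x) (-(h x))) ∈ 𝒟 := hmax h hh _ (hneg h hh)
      have habs : ∀ x, max (h x) (-(h x)) = |h x| :=
        fun x => (abs_eq_max_neg (a := h x)).symm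
      have haK : (fun x => max (h x) (-(h x))) ∈ posBall 𝒟 := by
        refine ⟨hha, fun x => ?_, ?_⟩
        · show 0 ≤ max (h x) (-(h x))
          rw [habs x]; exact abs_nonneg _
        · show (⨆ x, |max (h x) (-(h x))|) ≤ 1
          apply ciSup_le
          intro x
          rw [habs x, abs_abs]
          exact le_trans (hsn_le h hh x) hs
      have h1 : |L f f h| ≤ L f f (fun x => max (h x) (-(h x))) := by
        rw [abs_le]
        constructor
        · have hs' : (fun x => max (h x) (-(h x))) + h ∈ 𝒟 := hadd _ hha h hh
          have hp : 0 ≤ L f f ((fun x => max (h x) (-(h x))) + h) :=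
            hLpos f hf _ hs' (fun x => by
              simp only [Pi.add_apply]
              rw [habs x]
              linarith [neg_abs_le (h x)])
          rw [hLaddh f hf f hf _ hha h hh] at hp
          linarith
        · exact hmono f hf h hh _ hha (fun x => by rw [habs x]; exact le_abs_self _)
      exact le_trans h1 (le_csSup (hbddQ f hf) (Set.mem_image_of_mem _ haK))
    · apply csSup_le (hneQ f hf)
      rintro _ ⟨h, hh, rfl⟩
      obtain ⟨h1, _, h3⟩ := hKmem h hh
      exact le_trans (le_abs_self _)
        (le_csSup (hbddS f hf) (Set.mem_image_of_mem _ ⟨h1, h3⟩))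
  -- directedness of posBall
  have hdirK : ∀ h₁ ∈ posBall 𝒟, ∀ h₂ ∈ posBall 𝒟, ∃ m ∈ posBall 𝒟,
      (∀ x, h₁ x ≤ m x) ∧ (∀ x, h₂ x ≤ m x) := by
    rintro h₁ ⟨hh₁, hp₁, hs₁⟩ h₂ ⟨hh₂, hp₂, hs₂⟩
    refine ⟨fun x => max (h₁ x) (h₂ x),
      ⟨hmax h₁ hh₁ h₂ hh₂, fun x => le_trans (hp₁ x) (le_max_left _ _), ?_⟩,
      fun x => le_max_left _ _, fun x => le_max_right _ _⟩
    show (⨆ x, |max (h₁ x) (h₂ x)|) ≤ 1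
    apply ciSup_le
    intro x
    rw [abs_of_nonneg (le_trans (hp₁ x) (le_max_left _ _))]
    exact max_le (le_trans (le_abs_self _) (le_trans (hsn_le h₁ hh₁ x) hs₁))
      (le_trans (le_abs_self _) (le_trans (hsn_le h₂ hh₂ x) hs₂))
  have monoK : ∀ u ∈ 𝒟, ∀ a ∈ posBall 𝒟, ∀ b ∈ posBall 𝒟,
      (∀ x, a x ≤ b x) → L u u a ≤ L u u b :=
    fun u hu a ha b hb hab =>
      hmono u hu a (hKmem a ha).1 b (hKmem b hb).1 hab
  have bndK : ∀ u ∈ 𝒟, ∃ C, ∀ h ∈ posBall 𝒟, L u u h ≤ C := by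
    intro u hu
    obtain ⟨C, hC⟩ := hbound u hu
    exact ⟨C, fun h hh =>
      le_trans (le_abs_self _) (hC h (hKmem h hh).1 (hKmem h hh).2.2)⟩
  -- bilinear expansion
  have expand : ∀ u ∈ 𝒟, ∀ v ∈ 𝒟, ∀ h ∈ 𝒟,
      L (u + v) (u + v) h = L u u h + 2 * L u v h + L v v h := by
    intro u hu v hv h hh
    have huv : u + v ∈ 𝒟 := hadd u hu v hv
    rw [hLaddf u hu v hv (u + v) huv h hh,
        hLsym u hu (u + v) huv h hh, hLsym v hv (u + v) huv h hh,
        hLaddf u hu v hv u hu h hh, hLaddf u hu v hv v hv h hh,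
        hLsym v hv u hu h hh]
    ring
  constructor
  · -- parallelogram identity
    intro f hf g hg
    have hng : (-1 : ℝ) • g ∈ 𝒟 := hsmul (-1) g hg
    have hfg : f - g = f + (-1 : ℝ) • g := by
      funext x; simp [sub_eq_add_neg]
    have hfg𝒟 : f + g ∈ 𝒟 := hadd f hf g hg
    have hfmg𝒟 : f - g ∈ 𝒟 := by rw [hfg]; exact hadd f hf _ hng
    have hne : (posBall 𝒟).Nonempty := ⟨0, h0K f hf⟩
    -- pointwise identity
    have hiden : ∀ h ∈ 𝒟, L (f + g) (f + g) h + L (f - g) (f - g) h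
        = (L f f h + L f f h) + (L g g h + L g g h) := by
      intro h hh
      have e1 := expand f hf g hg h hh
      have e2 := expand f hf ((-1 : ℝ) • g) hng h hh
      have e3 : L f ((-1 : ℝ) • g) h = -1 * L f g h := by
        rw [hLsym f hf _ hng h hh, hLsmulf (-1) g hg f hf h hh,
          hLsym g hg f hf h hh]
      have e4 : L ((-1 : ℝ) • g) ((-1 : ℝ) • g) h = L g g h := by
        rw [hLsmulf (-1) g hg _ hng h hh, hLsym g hg _ hng h hh,
          hLsmulf (-1) g hg g hg h hh]
        ring
      rw [hfg, e1, e2, e3, e4]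
      ring
    have himg : (fun h => L (f + g) (f + g) h + L (f - g) (f - g) h) '' posBall 𝒟
        = (fun h => (L f f h + L f f h) + (L g g h + L g g h)) '' posBall 𝒟 :=
      Set.image_congr (fun h hh => hiden h (hKmem h hh).1)
    have A1 : sSup ((fun h => L (f + g) (f + g) h + L (f - g) (f - g) h) '' posBall 𝒟)
        = sSup ((fun h => L (f + g) (f + g) h) '' posBall 𝒟)
          + sSup ((fun h => L (f - g) (f - g) h) '' posBall 𝒟) :=
      sSup_image_add_aux _ _ _ hne hdirK (monoK _ hfg𝒟) (monoK _ hfmg𝒟)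
        (bndK _ hfg𝒟) (bndK _ hfmg𝒟)
    have bnd2 : ∀ u ∈ 𝒟, ∃ C, ∀ h ∈ posBall 𝒟, L u u h + L u u h ≤ C := by
      intro u hu
      obtain ⟨C, hC⟩ := bndK u hu
      exact ⟨C + C, fun h hh => add_le_add (hC h hh) (hC h hh)⟩
    have A2 : sSup ((fun h => (L f f h + L f f h) + (L g g h + L g g h)) '' posBall 𝒟)
        = sSup ((fun h => L f f h + L f f h) '' posBall 𝒟)
          + sSup ((fun h => L g g h + L g g h) '' posBall 𝒟) :=
      sSup_image_add_aux _ _ _ hne hdirK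
        (fun a ha b hb hab => add_le_add (monoK f hf a ha b hb hab) (monoK f hf a ha b hb hab))
        (fun a ha b hb hab => add_le_add (monoK g hg a ha b hb hab) (monoK g hg a ha b hb hab))
        (bnd2 f hf) (bnd2 g hg)
    have A3 : sSup ((fun h => L f f h + L f f h) '' posBall 𝒟)
        = sSup ((fun h => L f f h) '' posBall 𝒟) + sSup ((fun h => L f f h) '' posBall 𝒟) :=
      sSup_image_add_aux _ _ _ hne hdirK (monoK f hf) (monoK f hf) (bndK f hf) (bndK f hf)
    have A4 : sSup ((fun h => L g g h + L g g h) '' posBall 𝒟)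
        = sSup ((fun h => L g g h) '' posBall 𝒟) + sSup ((fun h => L g g h) '' posBall 𝒟) :=
      sSup_image_add_aux _ _ _ hne hdirK (monoK g hg) (monoK g hg) (bndK g hg) (bndK g hg)
    have chain : sSup ((fun h => L (f + g) (f + g) h) '' posBall 𝒟)
        + sSup ((fun h => L (f - g) (f - g) h) '' posBall 𝒟)
        = 2 * sSup ((fun h => L f f h) '' posBall 𝒟)
          + 2 * sSup ((fun h => L g g h) '' posBall 𝒟) := by
      rw [← A1, himg, A2, A3, A4]; ring
    simp only [lagEnergy]
    rw [key1 f hf, key1 g hg, key1 _ hfg𝒟, key1 _ hfmg𝒟]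
    linarith
  · -- unit contraction operates
    intro f hf
    obtain ⟨hTf, hTle⟩ := hLT1 f hf
    simp only [lagEnergy]
    rw [key1 f hf, key1 _ hTf]
    have hne : (posBall 𝒟).Nonempty := ⟨0, h0K f hf⟩
    have hle : sSup ((fun h => L (unitContraction ∘ f) (unitContraction ∘ f) h) '' posBall 𝒟)
        ≤ sSup ((fun h => L f f h) '' posBall 𝒟) := by
      apply csSup_le (hne.image _)
      rintro _ ⟨h, hh, rfl⟩
      obtain ⟨h1, h2, _⟩ := hKmem h hh
      exact le_trans (hTle h h1 h2)
        (le_csSup (hbddQ f hf) (Set.mem_image_of_mem _ hh))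
    linarith
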